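/- Among real polynomials P of degree at most n satisfying |P(x)| ≤ 1 for all x ∈ [−1,1], the Chebyshev polynomial T_n has extremal growth outside the interval: for every x with |x| > 1 and every such P, |P(x)| ≤ |T_n(x)|. -/

import Mathlib

open Polynomial Real

lemma natDegree_T_le_aux : ∀ n : ℕ, (Polynomial.Chebyshev.T ℝ (n : ℤ)).natDegree ≤ n := by
  intro n
  induction n using Nat.strong_induction_on with
  | _ n ih =>
    match n with
    | 0 => simp [Polynomial.Chebyshev.T_zero]
    | 1 => simp [Polynomial.Chebyshev.T_one]
    | (m+2) =>
      have h : ((m+2 : ℕ) : ℤ) = (m : ℤ) + 2 := by push_cast; ring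
      rw [h, Polynomial.Chebyshev.T_add_two]
      refine le_trans (natDegree_sub_le _ _) (max_le ?_ ?_)
      · refine le_trans natDegree_mul_le ?_
        have h1 : ((m:ℤ)+1) = ((m+1 : ℕ) : ℤ) := by push_cast; ring
        rw [h1]
        have h2 := ih (m+1) (by omega)
        have h3 : (2 * X : ℝ[X]).natDegree ≤ 1 :=
          le_trans natDegree_mul_le (by simp)
        omega
      · exact le_trans (ih m (by omega)) (by omega)

/-- Extremal growth of Chebyshev polynomials: among real polynomials of degree at
most `n` bounded by `1` in modulus on `[-1, 1]`, the Chebyshev polynomial `T_n`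
grows fastest in modulus outside `[-1, 1]`. -/
theorem chebyshev_extremal_growth (n : ℕ) (P : Polynomial ℝ)
    (hdeg : P.natDegree ≤ n)
    (hbound : ∀ x ∈ Set.Icc (-1 : ℝ) 1, |P.eval x| ≤ 1) :
    ∀ x : ℝ, 1 < |x| → |P.eval x| ≤ |(Polynomial.Chebyshev.T ℝ n).eval x| := by
  intro x hx
  rcases Nat.eq_zero_or_pos n with hn | hn
  · subst hn
    have hP : P = C (P.coeff 0) := Polynomial.eq_C_of_natDegree_le_zero hdeg
    have hb := hbound 0 (by norm_num)
    rw [hP] at hb ⊢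
    simpa [Polynomial.Chebyshev.T_zero] using hb
  by_contra hcon
  push_neg at hcon
  have hPx : P.eval x ≠ 0 := by
    intro h
    rw [h, abs_zero] at hcon
    exact absurd (abs_nonneg _) (not_le.2 hcon)
  set c : ℝ := (Polynomial.Chebyshev.T ℝ n).eval x / P.eval x with hc
  have hc1 : |c| < 1 := by
    rw [hc, abs_div, div_lt_one (abs_pos.2 hPx)]; exact hcon
  set R : ℝ[X] := Polynomial.Chebyshev.T ℝ n - C c * P with hRdef
  have hRdeg : R.natDegree ≤ n := by
    refine le_trans (natDegree_sub_le _ _) (max_le (natDegree_T_le_aux n) ?_)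
    refine le_trans natDegree_mul_le ?_
    simpa using hdeg
  have hnR : (0:ℝ) < n := by exact_mod_cast hn
  set s : ℕ → ℝ := fun k => Real.cos (k * π / n) with hs
  have hmem : ∀ k, k ≤ n → (k * π / n : ℝ) ∈ Set.Icc 0 π := by
    intro k hk
    have hk' : (k:ℝ) ≤ n := by exact_mod_cast hk
    constructor
    · positivity
    · rw [div_le_iff₀ hnR]
      nlinarith [Real.pi_pos]
  have hanti : ∀ k l, k < l → l ≤ n → s l < s k := by
    intro k l hkl hl
    apply Real.strictAntiOn_cos (hmem k (by omega)) (hmem l hl)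
    have hkl' : (k:ℝ) < l := by exact_mod_cast hkl
    have : (k:ℝ) * π < l * π := by nlinarith [Real.pi_pos]
    exact (div_lt_div_iff_of_pos_right hnR).mpr this
  have hsIcc : ∀ k, s k ∈ Set.Icc (-1:ℝ) 1 :=
    fun k => ⟨Real.neg_one_le_cos _, Real.cos_le_one _⟩
  have hTval : ∀ k, k ≤ n → (Polynomial.Chebyshev.T ℝ n).eval (s k) = (-1)^k := by
    intro k hk
    show (Polynomial.Chebyshev.T ℝ n).eval (Real.cos (k * π / n)) = (-1)^k
    rw [Polynomial.Chebyshev.T_real_cos]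
    have h1 : ((n:ℤ):ℝ) * (k * π / n) = k * π - 0 := by
      push_cast
      field_simp
      ring
    rw [h1, Real.cos_nat_mul_pi_sub, Real.cos_zero, mul_one]
  have hcP : ∀ y ∈ Set.Icc (-1:ℝ) 1, |c * P.eval y| < 1 := by
    intro y hy
    rw [abs_mul]
    calc |c| * |P.eval y| ≤ |c| * 1 :=
          mul_le_mul_of_nonneg_left (hbound y hy) (abs_nonneg _)
      _ = |c| := mul_one _
      _ < 1 := hc1
  have hRval : ∀ k, k ≤ n → R.eval (s k) = (-1)^k - c * P.eval (s k) := by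
    intro k hk
    simp [hRdef, hTval k hk]
  have hRpos : ∀ k, k ≤ n → Even k → 0 < R.eval (s k) := by
    intro k hk hke
    rw [hRval k hk, hke.neg_one_pow]
    have := (abs_lt.mp (hcP (s k) (hsIcc k))).2
    linarith
  have hRneg : ∀ k, k ≤ n → ¬ Even k → R.eval (s k) < 0 := by
    intro k hk hko
    rw [hRval k hk, (Nat.not_even_iff_odd.mp hko).neg_one_pow]
    have := (abs_lt.mp (hcP (s k) (hsIcc k))).1
    linarith
  have hcont : ∀ a b : ℝ, ContinuousOn (fun y => R.eval y) (Set.Icc a b) :=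
    fun a b => (Polynomial.continuous R).continuousOn
  have hroot : ∀ k : Fin n, ∃ r ∈ Set.Ioo (s (k+1)) (s k), R.eval r = 0 := by
    intro ⟨k, hk⟩
    simp only
    have hlt : s (k+1) < s k := hanti k (k+1) (by omega) (by omega)
    by_cases hke : Even k
    · have h1 : 0 < R.eval (s k) := hRpos k (by omega) hke
      have h2 : R.eval (s (k+1)) < 0 := hRneg (k+1) (by omega)
        (by simp [Nat.even_add_one, hke])
      have := intermediate_value_Ioo hlt.le (hcont _ _)
      obtain ⟨r, hr, hr0⟩ := this ⟨h2, h1⟩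
      exact ⟨r, hr, hr0⟩
    · have h1 : R.eval (s k) < 0 := hRneg k (by omega) hke
      have h2 : 0 < R.eval (s (k+1)) := hRpos (k+1) (by omega)
        (by simp [Nat.even_add_one, hke])
      have := intermediate_value_Ioo' hlt.le (hcont _ _)
      obtain ⟨r, hr, hr0⟩ := this ⟨h1, h2⟩
      exact ⟨r, hr, hr0⟩
  choose r hrmem hrzero using hroot
  have hrabs : ∀ k : Fin n, |r k| < 1 := by
    intro k
    have h1 := (hrmem k).1
    have h2 := (hrmem k).2
    have h3 := (hsIcc ((k:ℕ)+1)).1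
    have h4 := (hsIcc (k:ℕ)).2
    rw [abs_lt]
    constructor <;> linarith
  have hrmono : ∀ i j : Fin n, (i:ℕ) < (j:ℕ) → r j < r i := by
    intro i j hij
    have h1 := (hrmem i).1
    have h2 := (hrmem j).2
    have h3 : s (j:ℕ) ≤ s ((i:ℕ)+1) := by
      rcases Nat.lt_or_ge ((i:ℕ)+1) (j:ℕ) with h | h
      · exact (hanti _ _ h (by omega)).le
      · have : (i:ℕ)+1 = (j:ℕ) := by omega
        rw [this]
    linarith
  -- build injective family of n+1 roots
  set F : Fin (n+1) → ℝ := fun k => if h : (k:ℕ) < n then r ⟨k, h⟩ else x with hF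
  have hFinj : Function.Injective F := by
    intro i j hij
    by_contra hne
    have hne' : (i:ℕ) ≠ (j:ℕ) := fun h => hne (Fin.ext h)
    rw [hF] at hij
    simp only at hij
    by_cases hi : (i:ℕ) < n <;> by_cases hj : (j:ℕ) < n
    · rw [dif_pos hi, dif_pos hj] at hij
      rcases Nat.lt_or_ge (i:ℕ) (j:ℕ) with h | h
      · exact absurd hij (ne_of_gt (hrmono ⟨i, hi⟩ ⟨j, hj⟩ (by simp only [Fin.val_mk]; omega)))
      · exact absurd hij (ne_of_lt (hrmono ⟨j, hj⟩ ⟨i, hi⟩ (by simp only [Fin.val_mk]; omega)))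
    · rw [dif_pos hi, dif_neg hj] at hij
      have := hrabs ⟨i, hi⟩
      rw [hij] at this
      linarith
    · rw [dif_neg hi, dif_pos hj] at hij
      have := hrabs ⟨j, hj⟩
      rw [← hij] at this
      linarith
    · have hi' := i.isLt
      have hj' := j.isLt
      exact hne' (by omega)
  have hFeval : ∀ k : Fin (n+1), R.eval (F k) = 0 := by
    intro k
    rw [hF]
    simp only
    by_cases h : (k:ℕ) < n
    · rw [dif_pos h]; exact hrzero ⟨k, h⟩
    · rw [dif_neg h]
      simp only [hRdef, eval_sub, eval_mul, eval_C]
      rw [hc]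
      field_simp
      ring
  have hR0 : R = 0 := by
    apply Polynomial.eq_zero_of_natDegree_lt_card_of_eval_eq_zero R hFinj hFeval
    simpa using Nat.lt_succ_of_le hRdeg
  -- derive contradiction
  have hT1 : (Polynomial.Chebyshev.T ℝ n).eval 1 = 1 := by
    have := hTval 0 (by omega)
    simpa [hs] using this
  have heq : (Polynomial.Chebyshev.T ℝ n).eval 1 = c * P.eval 1 := by
    have : R.eval 1 = 0 := by rw [hR0]; simp
    simp only [hRdef, eval_sub, eval_mul, eval_C] at this
    linarith
  have := hcP 1 (by norm_num)
  rw [← heq, hT1] at this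
  simp at this
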